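/- arXiv:1412.5030 — 2 statements merged into one kernel-verified Lean document; each statement's English description precedes it below -/
import Mathlib

section
/- Let (x_n) be a sequence in a Banach space X such that ∑ r_n x_n converges in L¹([0,1]; X). If there exist σ₀ > 0 and c > 0 such that ∑_{n=1}^N ‖x_n‖ ≤ c N^{σ₀} ∫₀¹ ‖∑_{n=1}^N r_n(t) x_n‖ dt for every N, then for every σ > σ₀ the series ∑_n ‖x_n‖ / n^σ converges, with bound ∑_n ‖x_n‖/n^σ ≤ c K (1 + ∑_{n=1}^∞ σ n^{-(σ-σ₀+1)}) where K = ∫₀¹ ‖∑_n r_n(t) x_n‖ dt. -/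
open MeasureTheory Filter Finset

/-- The `n`-th Rademacher function on `[0,1]`. -/
noncomputable def rad (n : ℕ) (t : ℝ) : ℝ :=
  if Int.fract ((2 ^ n : ℝ) * t) < 1 / 2 then 1 else -1

/-- Partial sums of the Rademacher series `∑ rₙ(t) xₙ`. -/
noncomputable def radPartial {X : Type*} [NormedAddCommGroup X] [NormedSpace ℝ X]
    (x : ℕ → X) (N : ℕ) (t : ℝ) : X :=
  ∑ n ∈ Finset.range N, rad n t • x n

/-- `f` is the limit of the Rademacher series `∑ rₙ xₙ` in `L¹([0,1];X)`. -/
def IsRadLimit {X : Type*} [NormedAddCommGroup X] [NormedSpace ℝ X]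
    (x : ℕ → X) (f : ℝ → X) : Prop :=
  (∀ N, IntervalIntegrable (fun t => ‖radPartial x N t - f t‖) volume 0 1) ∧
    Tendsto (fun N => ∫ t in (0:ℝ)..1, ‖radPartial x N t - f t‖) atTop (nhds 0)

/-! ### Auxiliary lemmas about `rad` -/

lemma rad_measurable (n : ℕ) : Measurable (rad n) := by
  unfold rad
  exact Measurable.ite
    (measurableSet_lt (measurable_fract.comp (measurable_const_mul _)) measurable_const)
    measurable_const measurable_const

lemma rad_eq_one_or (n : ℕ) (t : ℝ) : rad n t = 1 ∨ rad n t = -1 := by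
  unfold rad; split <;> simp

lemma abs_rad (n : ℕ) (t : ℝ) : |rad n t| = 1 := by
  rcases rad_eq_one_or n t with h | h <;> rw [h] <;> norm_num

lemma rad_succ (n : ℕ) (t : ℝ) : rad (n + 1) t = rad n (2 * t) := by
  unfold rad
  rw [show (2 : ℝ) ^ (n + 1) * t = 2 ^ n * (2 * t) by ring]

lemma rad_add_one (n : ℕ) (t : ℝ) : rad n (t + 1) = rad n t := by
  unfold rad
  rw [show (2 : ℝ) ^ n * (t + 1) = 2 ^ n * t + ((2 ^ n : ℤ) : ℝ) by push_cast; ring,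
    Int.fract_add_intCast]

lemma rad_zero_pos {t : ℝ} (h0 : 0 ≤ t) (h : t < 1 / 2) : rad 0 t = 1 := by
  unfold rad
  rw [pow_zero, one_mul, Int.fract_eq_self.2 ⟨h0, by linarith⟩, if_pos h]

lemma rad_zero_neg {t : ℝ} (h0 : 1 / 2 ≤ t) (h : t < 1) : rad 0 t = -1 := by
  unfold rad
  rw [pow_zero, one_mul, Int.fract_eq_self.2 ⟨by linarith, h⟩, if_neg (by linarith)]

section Aux

variable {X : Type*} [NormedAddCommGroup X] [NormedSpace ℝ X]

lemma radSum_stronglyMeasurable (v : X) (y : ℕ → X) (N : ℕ) :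
    StronglyMeasurable (fun t => v + ∑ n ∈ Finset.range N, rad n t • y n) := by
  apply StronglyMeasurable.add stronglyMeasurable_const
  apply Finset.stronglyMeasurable_fun_sum
  intro n _
  exact (rad_measurable n).stronglyMeasurable.smul_const (y n)

lemma radSum_intInt (v : X) (y : ℕ → X) (N : ℕ) (a b : ℝ) :
    IntervalIntegrable (fun t => ‖v + ∑ n ∈ Finset.range N, rad n t • y n‖) volume a b := by
  rw [intervalIntegrable_iff]
  apply Integrable.mono' (g := fun _ => ‖v‖ + ∑ n ∈ Finset.range N, ‖y n‖)
  · exact integrableOn_const measure_Ioc_lt_top.ne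
  · exact ((radSum_stronglyMeasurable v y N).norm.aestronglyMeasurable).restrict
  · refine ae_of_all _ fun t => ?_
    rw [Real.norm_eq_abs, abs_norm]
    refine (norm_add_le _ _).trans (add_le_add le_rfl ?_)
    refine (norm_sum_le _ _).trans (Finset.sum_le_sum fun n _ => ?_)
    rw [norm_smul, Real.norm_eq_abs, abs_rad, one_mul]

/-- The key recursion for the integral of the norm of a shifted Rademacher sum. -/
lemma radSum_rec (v : X) (y : ℕ → X) (N : ℕ) :
    (∫ t in (0:ℝ)..1, ‖v + ∑ n ∈ Finset.range (N + 1), rad n t • y n‖) =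
      (1 / 2) * (∫ t in (0:ℝ)..1, ‖(v + y 0) + ∑ n ∈ Finset.range N, rad n t • y (n + 1)‖) +
      (1 / 2) * (∫ t in (0:ℝ)..1, ‖(v - y 0) + ∑ n ∈ Finset.range N, rad n t • y (n + 1)‖) := by
  set W : ℝ → X := fun u => ∑ n ∈ Finset.range N, rad n u • y (n + 1) with hW
  have hWper : ∀ u : ℝ, W (u + 1) = W u := by
    intro u; simp only [hW]
    exact Finset.sum_congr rfl fun n _ => by rw [rad_add_one]
  have hshape : ∀ t : ℝ, v + ∑ n ∈ Finset.range (N + 1), rad n t • y n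
      = v + rad 0 t • y 0 + W (2 * t) := by
    intro t
    rw [Finset.sum_range_succ']
    simp only [hW]
    rw [show ∑ n ∈ Finset.range N, rad (n + 1) t • y (n + 1)
        = ∑ n ∈ Finset.range N, rad n (2 * t) • y (n + 1) from
      Finset.sum_congr rfl fun n _ => by rw [rad_succ]]
    abel
  have hInt := fun (a b : ℝ) => radSum_intInt v y (N + 1) a b
  have hsplit : (∫ t in (0:ℝ)..1, ‖v + ∑ n ∈ Finset.range (N + 1), rad n t • y n‖) =
      (∫ t in (0:ℝ)..(1/2), ‖v + ∑ n ∈ Finset.range (N + 1), rad n t • y n‖) +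
      ∫ t in (1/2:ℝ)..1, ‖v + ∑ n ∈ Finset.range (N + 1), rad n t • y n‖ :=
    (intervalIntegral.integral_add_adjacent_intervals (hInt 0 (1/2)) (hInt (1/2) 1)).symm
  have hae : ∀ᵐ t : ℝ ∂(volume : Measure ℝ), t ≠ (1/2 : ℝ) := by
    rw [ae_iff]
    simp only [ne_eq, not_not, Set.setOf_eq_eq_singleton]
    exact measure_singleton _
  have hae1 : ∀ᵐ t : ℝ ∂(volume : Measure ℝ), t ≠ (1 : ℝ) := by
    rw [ae_iff]
    simp only [ne_eq, not_not, Set.setOf_eq_eq_singleton]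
    exact measure_singleton _
  -- first piece
  have h1 : (∫ t in (0:ℝ)..(1/2), ‖v + ∑ n ∈ Finset.range (N + 1), rad n t • y n‖) =
      (1 / 2) * ∫ u in (0:ℝ)..1, ‖(v + y 0) + W u‖ := by
    have hcongr : (∫ t in (0:ℝ)..(1/2), ‖v + ∑ n ∈ Finset.range (N + 1), rad n t • y n‖) =
        ∫ t in (0:ℝ)..(1/2), ‖(v + y 0) + W (2 * t)‖ := by
      apply intervalIntegral.integral_congr_ae
      filter_upwards [hae] with t ht htI
      rw [Set.uIoc_of_le (by norm_num : (0:ℝ) ≤ 1/2)] at htI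
      have h0t : 0 ≤ t := le_of_lt htI.1
      have ht2 : t < 1 / 2 := lt_of_le_of_ne htI.2 ht
      rw [hshape t, rad_zero_pos h0t ht2, one_smul]
    rw [hcongr]
    have := intervalIntegral.integral_comp_mul_left (a := (0:ℝ)) (b := 1/2)
      (fun u => ‖(v + y 0) + W u‖) (two_ne_zero)
    rw [this]
    norm_num
  -- second piece
  have h2 : (∫ t in (1/2:ℝ)..1, ‖v + ∑ n ∈ Finset.range (N + 1), rad n t • y n‖) =
      (1 / 2) * ∫ u in (0:ℝ)..1, ‖(v - y 0) + W u‖ := by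
    have hcongr : (∫ t in (1/2:ℝ)..1, ‖v + ∑ n ∈ Finset.range (N + 1), rad n t • y n‖) =
        ∫ t in (1/2:ℝ)..1, ‖(v - y 0) + W (2 * t)‖ := by
      apply intervalIntegral.integral_congr_ae
      filter_upwards [hae1] with t ht htI
      rw [Set.uIoc_of_le (by norm_num : (1/2:ℝ) ≤ 1)] at htI
      have h0t : 1 / 2 ≤ t := le_of_lt htI.1
      have ht1 : t < 1 := lt_of_le_of_ne htI.2 ht
      rw [hshape t, rad_zero_neg h0t ht1, neg_one_smul]
      congr 1; abel
    rw [hcongr]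
    have hc := intervalIntegral.integral_comp_mul_left (a := (1/2:ℝ)) (b := 1)
      (fun u => ‖(v - y 0) + W u‖) (two_ne_zero)
    rw [hc]
    have hshift := intervalIntegral.integral_comp_add_right (a := (0:ℝ)) (b := 1)
      (fun u => ‖(v - y 0) + W u‖) 1
    have h01 : (∫ x in (0:ℝ)..1, ‖(v - y 0) + W (x + 1)‖) = ∫ x in (0:ℝ)..1, ‖(v - y 0) + W x‖ :=
      intervalIntegral.integral_congr fun u _ => by rw [hWper]
    have h12 : (∫ u in (1:ℝ)..2, ‖(v - y 0) + W u‖) = ∫ u in (0:ℝ)..1, ‖(v - y 0) + W u‖ := by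
      rw [← h01, hshift]; norm_num
    norm_num at h12 ⊢
    rw [h12]
  rw [hsplit, h1, h2]

lemma radSum_mono (N : ℕ) : ∀ (v : X) (y : ℕ → X),
    (∫ t in (0:ℝ)..1, ‖v + ∑ n ∈ Finset.range N, rad n t • y n‖) ≤
      ∫ t in (0:ℝ)..1, ‖v + ∑ n ∈ Finset.range (N + 1), rad n t • y n‖ := by
  induction N with
  | zero =>
    intro v y
    rw [radSum_rec]
    simp only [Finset.range_zero, Finset.sum_empty, add_zero,
      intervalIntegral.integral_const, sub_zero, one_smul, smul_eq_mul]
    have hkey : ‖v‖ ≤ 1 / 2 * ‖v + y 0‖ + 1 / 2 * ‖v - y 0‖ := by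
      have h := norm_add_le (v + y 0) (v - y 0)
      have h2 : (v + y 0) + (v - y 0) = (2 : ℝ) • v := by
        rw [two_smul]; abel
      rw [h2, norm_smul] at h
      simp only [Real.norm_ofNat] at h
      linarith
    simpa using hkey
  | succ N ih =>
    intro v y
    rw [radSum_rec, radSum_rec]
    have h1 := ih (v + y 0) (fun n => y (n + 1))
    have h2 := ih (v - y 0) (fun n => y (n + 1))
    linarith

end Aux

lemma rpow_diff_le {σ : ℝ} (hσ : 0 < σ) {a : ℝ} (ha : 1 ≤ a) :
    a ^ (-σ) - (a + 1) ^ (-σ) ≤ σ * a ^ (-σ - 1) := by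
  have ha0 : 0 < a := lt_of_lt_of_le one_pos ha
  obtain ⟨ξ, hξ, hslope⟩ := exists_hasDerivAt_eq_slope (fun x : ℝ => x ^ (-σ))
    (fun x : ℝ => (-σ) * x ^ (-σ - 1)) (by linarith : a < a + 1)
    (continuousOn_of_forall_continuousAt fun x hx =>
      Real.continuousAt_rpow_const x (-σ) (Or.inl (by
        have h1x : 1 ≤ x := le_trans ha hx.1
        exact (by linarith : (0:ℝ) < x).ne')))
    (fun x hx => Real.hasDerivAt_rpow_const (Or.inl (by
      have hax : a < x := hx.1
      exact (by linarith : (0:ℝ) < x).ne')))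
  have hξa : a < ξ := hξ.1
  have hξ0 : 0 < ξ := lt_trans ha0 hξa
  rw [add_sub_cancel_left, div_one] at hslope
  have : a ^ (-σ) - (a + 1) ^ (-σ) = σ * ξ ^ (-σ - 1) := by
    have := hslope
    nlinarith [this]
  rw [this]
  apply mul_le_mul_of_nonneg_left _ hσ.le
  exact Real.rpow_le_rpow_of_nonpos ha0 hξa.le (by linarith)

/-- The Abel summation step. -/
theorem abel_summation_rad {X : Type*} [NormedAddCommGroup X] [NormedSpace ℝ X]
    [CompleteSpace X] (x : ℕ → X) (f : ℝ → X) (hf : IsRadLimit x f)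
    (σ₀ c : ℝ) (hσ₀ : 0 < σ₀) (hc : 0 < c)
    (hb : ∀ N : ℕ, ∑ n ∈ Finset.range N, ‖x n‖ ≤
      c * (N : ℝ) ^ σ₀ * ∫ t in (0:ℝ)..1, ‖radPartial x N t‖) :
    ∀ σ : ℝ, σ₀ < σ →
      Summable (fun n : ℕ => ‖x n‖ / ((n : ℝ) + 1) ^ σ) ∧
      ∑' n : ℕ, ‖x n‖ / ((n : ℝ) + 1) ^ σ ≤
        c * (∫ t in (0:ℝ)..1, ‖f t‖) *
          (1 + ∑' n : ℕ, σ / ((n : ℝ) + 1) ^ (σ - σ₀ + 1)) := by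
  set K : ℝ := ∫ t in (0:ℝ)..1, ‖f t‖ with hK
  set I : ℕ → ℝ := fun N => ∫ t in (0:ℝ)..1, ‖radPartial x N t‖ with hI
  -- rewrite `I` using the `v + sum` shape
  have hIeq : ∀ N, I N = ∫ t in (0:ℝ)..1, ‖(0 : X) + ∑ n ∈ Finset.range N, rad n t • x n‖ := by
    intro N
    exact intervalIntegral.integral_congr fun t _ => by simp [radPartial]
  have hSint : ∀ N, IntervalIntegrable (fun t => ‖radPartial x N t‖) volume 0 1 := by
    intro N
    have := radSum_intInt (0 : X) x N 0 1
    have heq : (fun t => ‖(0 : X) + ∑ n ∈ Finset.range N, rad n t • x n‖)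
        = fun t => ‖radPartial x N t‖ := by
      funext t; simp [radPartial]
    rwa [heq] at this
  have hfInt : IntervalIntegrable (fun t => ‖f t‖) volume 0 1 := by
    have := hf.1 0
    simp only [radPartial, Finset.range_zero, Finset.sum_empty, zero_sub, norm_neg] at this
    exact this
  -- I is monotone
  have hImono : Monotone I := by
    apply monotone_nat_of_le_succ
    intro N
    rw [hIeq N, hIeq (N + 1)]
    exact radSum_mono N 0 x
  -- I tends to K
  have hItend : Tendsto I atTop (nhds K) := by
    rw [tendsto_iff_dist_tendsto_zero]
    apply squeeze_zero (fun n => dist_nonneg)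
      (g := fun N => ∫ t in (0:ℝ)..1, ‖radPartial x N t - f t‖) _ hf.2
    intro N
    rw [Real.dist_eq, abs_sub_le_iff]
    constructor
    · rw [← intervalIntegral.integral_sub (hSint N) hfInt]
      apply intervalIntegral.integral_mono_on (by norm_num) ((hSint N).sub hfInt) (hf.1 N)
      intro t _
      exact norm_sub_norm_le _ _
    · rw [← intervalIntegral.integral_sub hfInt (hSint N)]
      apply intervalIntegral.integral_mono_on (by norm_num) (hfInt.sub (hSint N)) (hf.1 N)
      intro t _
      calc ‖f t‖ - ‖radPartial x N t‖ ≤ ‖f t - radPartial x N t‖ := norm_sub_norm_le _ _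
        _ = ‖radPartial x N t - f t‖ := norm_sub_rev _ _
  have hIle : ∀ N, I N ≤ K := fun N => hImono.ge_of_tendsto hItend N
  have hK0 : 0 ≤ K := by
    apply intervalIntegral.integral_nonneg (by norm_num)
    intro t _; exact norm_nonneg _
  -- partial sums of norms are bounded
  have hA : ∀ N : ℕ, ∑ n ∈ Finset.range N, ‖x n‖ ≤ c * K * (N : ℝ) ^ σ₀ := by
    intro N
    calc ∑ n ∈ Finset.range N, ‖x n‖ ≤ c * (N : ℝ) ^ σ₀ * I N := hb N
      _ ≤ c * (N : ℝ) ^ σ₀ * K := by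
          apply mul_le_mul_of_nonneg_left (hIle N)
          positivity
      _ = c * K * (N : ℝ) ^ σ₀ := by ring
  have hcK0 : 0 ≤ c * K := mul_nonneg hc.le hK0
  intro σ hσ
  have hσpos : 0 < σ := lt_trans hσ₀ hσ
  set p : ℝ := σ - σ₀ + 1 with hpdef
  have hp : 1 < p := by simp only [hpdef]; linarith
  -- summability of the comparison series
  have hsump : Summable (fun n : ℕ => σ / ((n : ℝ) + 1) ^ p) := by
    have h1 : Summable (fun n : ℕ => 1 / (n : ℝ) ^ p) :=
      Real.summable_one_div_nat_rpow.2 hp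
    have h2 : Summable (fun n : ℕ => 1 / ((n : ℝ) + 1) ^ p) := by
      have := (summable_nat_add_iff 1).2 h1
      apply this.congr
      intro n; push_cast; ring_nf
    apply (h2.mul_left σ).congr
    intro n
    rw [mul_one_div]
  set T : ℝ := ∑' n : ℕ, σ / ((n : ℝ) + 1) ^ p with hT
  have hT0 : 0 ≤ T := tsum_nonneg fun n => by positivity
  -- the partial sum bound via Abel summation
  have hpart : ∀ N : ℕ, ∑ n ∈ Finset.range N, ‖x n‖ / ((n : ℝ) + 1) ^ σ ≤ c * K * (1 + T) := by
    intro N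
    have hRHS0 : (0:ℝ) ≤ c * K * (1 + T) := mul_nonneg hcK0 (by linarith)
    rcases Nat.eq_zero_or_pos N with rfl | hN
    · simpa using hRHS0
    obtain ⟨m, rfl⟩ := Nat.exists_eq_add_of_le hN
    -- N = 1 + m; rewrite as m + 1
    rw [show 1 + m = m + 1 by ring]
    set F : ℕ → ℝ := fun i => ((i : ℝ) + 1) ^ (-σ) with hF
    have hterm : ∀ n : ℕ, ‖x n‖ / ((n : ℝ) + 1) ^ σ = F n • ‖x n‖ := by
      intro n
      have hn0 : (0:ℝ) < (n : ℝ) + 1 := by positivity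
      simp only [hF, smul_eq_mul]
      rw [Real.rpow_neg hn0.le]
      ring
    rw [Finset.sum_congr rfl fun n _ => hterm n, Finset.sum_range_by_parts]
    simp only [Nat.add_sub_cancel]
    have hA0 : ∀ n : ℕ, (0:ℝ) ≤ ∑ j ∈ Finset.range n, ‖x j‖ :=
      fun n => Finset.sum_nonneg fun j _ => norm_nonneg _
    -- first term bound
    have hfirst : F m • ∑ j ∈ Finset.range (m + 1), ‖x j‖ ≤ c * K := by
      have hx1 : (1:ℝ) ≤ (m : ℝ) + 1 := by have := Nat.cast_nonneg (α := ℝ) m; linarith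
      have h1 : F m • ∑ j ∈ Finset.range (m + 1), ‖x j‖ ≤
          ((m : ℝ) + 1) ^ (-σ) * (c * K * ((m : ℝ) + 1) ^ σ₀) := by
        simp only [hF, smul_eq_mul]
        apply mul_le_mul_of_nonneg_left
        · have := hA (m + 1)
          push_cast at this ⊢
          linarith
        · positivity
      calc F m • ∑ j ∈ Finset.range (m + 1), ‖x j‖
          ≤ ((m : ℝ) + 1) ^ (-σ) * (c * K * ((m : ℝ) + 1) ^ σ₀) := h1
        _ = c * K * (((m : ℝ) + 1) ^ (-σ) * ((m : ℝ) + 1) ^ σ₀) := by ring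
        _ = c * K * ((m : ℝ) + 1) ^ (σ₀ - σ) := by
            rw [← Real.rpow_add (by positivity)]; ring_nf
        _ ≤ c * K * 1 := by
            apply mul_le_mul_of_nonneg_left _ hcK0
            exact Real.rpow_le_one_of_one_le_of_nonpos hx1 (by linarith)
        _ = c * K := mul_one _
    -- second term bound
    have hsecond : - ∑ i ∈ Finset.range m,
        (F (i + 1) - F i) • ∑ j ∈ Finset.range (i + 1), ‖x j‖ ≤ c * K * T := by
      rw [← Finset.sum_neg_distrib]
      have hterm2 : ∀ i ∈ Finset.range m,
          -((F (i + 1) - F i) • ∑ j ∈ Finset.range (i + 1), ‖x j‖) ≤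
            c * K * (σ / ((i : ℝ) + 1) ^ p) := by
        intro i _
        have hi1 : (1:ℝ) ≤ (i : ℝ) + 1 := by have := Nat.cast_nonneg (α := ℝ) i; linarith
        have hi0 : (0:ℝ) < (i : ℝ) + 1 := by positivity
        have hdiff : F i - F (i + 1) ≤ σ * ((i : ℝ) + 1) ^ (-σ - 1) := by
          simp only [hF]
          push_cast
          exact rpow_diff_le hσpos hi1
        have hdiff0 : 0 ≤ F i - F (i + 1) := by
          simp only [hF, sub_nonneg]
          push_cast
          exact Real.rpow_le_rpow_of_nonpos hi0 (by linarith) (by linarith)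
        have hAb : ∑ j ∈ Finset.range (i + 1), ‖x j‖ ≤ c * K * ((i : ℝ) + 1) ^ σ₀ := by
          have := hA (i + 1); push_cast at this ⊢; linarith
        have hneg : -((F (i + 1) - F i) • ∑ j ∈ Finset.range (i + 1), ‖x j‖) =
            (F i - F (i + 1)) * ∑ j ∈ Finset.range (i + 1), ‖x j‖ := by
          rw [smul_eq_mul]; ring
        rw [hneg]
        calc (F i - F (i + 1)) * ∑ j ∈ Finset.range (i + 1), ‖x j‖
            ≤ (σ * ((i : ℝ) + 1) ^ (-σ - 1)) * (c * K * ((i : ℝ) + 1) ^ σ₀) := by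
              apply mul_le_mul hdiff hAb (hA0 _)
              have : (0:ℝ) ≤ ((i : ℝ) + 1) ^ (-σ - 1) := by positivity
              nlinarith
          _ = c * K * (σ * (((i : ℝ) + 1) ^ (-σ - 1) * ((i : ℝ) + 1) ^ σ₀)) := by ring
          _ = c * K * (σ * ((i : ℝ) + 1) ^ (-p)) := by
              rw [← Real.rpow_add hi0, hpdef]; ring_nf
          _ = c * K * (σ / ((i : ℝ) + 1) ^ p) := by
              rw [Real.rpow_neg hi0.le, div_eq_mul_inv]
      calc ∑ i ∈ Finset.range m, -((F (i + 1) - F i) • ∑ j ∈ Finset.range (i + 1), ‖x j‖)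
          ≤ ∑ i ∈ Finset.range m, c * K * (σ / ((i : ℝ) + 1) ^ p) :=
            Finset.sum_le_sum hterm2
        _ = c * K * ∑ i ∈ Finset.range m, σ / ((i : ℝ) + 1) ^ p := by
            rw [Finset.mul_sum]
        _ ≤ c * K * T := by
            apply mul_le_mul_of_nonneg_left _ hcK0
            exact Summable.sum_le_tsum _ (fun i _ => by positivity) hsump
    calc F m • (∑ j ∈ Finset.range (m + 1), ‖x j‖) -
          ∑ i ∈ Finset.range m, (F (i + 1) - F i) • ∑ j ∈ Finset.range (i + 1), ‖x j‖
        ≤ c * K + c * K * T := by linarith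
      _ = c * K * (1 + T) := by ring
  have hnn : ∀ n : ℕ, 0 ≤ ‖x n‖ / ((n : ℝ) + 1) ^ σ := fun n => by positivity
  exact ⟨summable_of_sum_range_le hnn hpart, Real.tsum_le_of_sum_range_le hnn hpart⟩
end

section
/- For σ < 1/(1+ε), there is a constant D > 0 (depending on σ, ε) such that ∑_{j=1}^N j^{-(1+ε)σ} ≥ D N^{1-(1+ε)σ} for all N ≥ 1. Combined with the lower bound on sums over prime powers, this shows: if K, m are such that ∑_{|α|=m, α supported on first N primes} p^{-ασ} ≤ K N^{(m+1)/2} for all N, then σ ≥ (m−1)/(2m). -/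
open Finset
open scoped Classical

private lemma not_summable_inv_nth_prime :
    ¬ Summable (fun n : ℕ => ((Nat.nth Nat.Prime n : ℝ))⁻¹) := by
  have hbij : Function.Bijective (fun n => (⟨Nat.nth Nat.Prime n, Nat.prime_nth_prime n⟩ : Nat.Primes)) := by
    constructor
    · intro a b h
      exact Nat.nth_injective Nat.infinite_setOf_prime (by simpa using congrArg Subtype.val h)
    · rintro ⟨p, hp⟩
      exact ⟨Nat.count Nat.Prime p, by simp [Nat.nth_count hp]⟩
  set e : ℕ ≃ Nat.Primes := Equiv.ofBijective _ hbij with he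
  intro h
  apply Nat.Primes.not_summable_one_div
  rw [← Equiv.summable_iff e (f := fun p : Nat.Primes => (1 / p : ℝ))]
  have hco : ((fun p : Nat.Primes => (1 / p : ℝ)) ∘ ⇑e)
      = fun n : ℕ => ((Nat.nth Nat.Prime n : ℝ))⁻¹ := by
    funext n
    simp [e, Equiv.ofBijective, one_div]
    rfl
  rw [hco]
  exact h

private lemma claimA (ε : ℝ) (hε : 0 < ε) :
    ∃ᶠ n in Filter.atTop, (Nat.nth Nat.Prime n : ℝ) ≤ ((n : ℝ) + 1) ^ (1 + ε) := by
  by_contra h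
  rw [Filter.not_frequently] at h
  rw [Filter.eventually_atTop] at h
  obtain ⟨M, hM⟩ := h
  have hs : Summable (fun n : ℕ => (((n : ℝ) + 1) ^ (1 + ε))⁻¹) := by
    have := (Real.summable_nat_rpow_inv (p := 1 + ε)).mpr (by linarith)
    have := (summable_nat_add_iff 1).mpr this
    simpa [Nat.cast_add] using this
  apply not_summable_inv_nth_prime
  rw [← summable_nat_add_iff M]
  have hs' := (summable_nat_add_iff M).mpr hs
  refine Summable.of_nonneg_of_le (fun n => by positivity) (fun n => ?_) hs'
  have h1 := hM (n + M) (Nat.le_add_left M n)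
  push_neg at h1
  have h2 : (0:ℝ) < ((n + M : ℕ) + 1 : ℝ) ^ (1 + ε) := by positivity
  exact inv_anti₀ h2 h1.le

private lemma card_monotone_ge (m N q : ℕ) (hm : 0 < m) (hq : m * q ≤ N) :
    q ^ m ≤ ((Finset.univ : Finset (Fin m → Fin N)).filter Monotone).card := by
  have hval : ∀ (a : Fin m → Fin q) (i : Fin m), (i : ℕ) * q + (a i : ℕ) < N := by
    intro a i
    calc (i : ℕ) * q + (a i : ℕ) < (i : ℕ) * q + q := by
          exact Nat.add_lt_add_left (a i).2 _
      _ = ((i : ℕ) + 1) * q := by ring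
      _ ≤ m * q := Nat.mul_le_mul_right q i.2
      _ ≤ N := hq
  set F : (Fin m → Fin q) → (Fin m → Fin N) :=
    fun a i => ⟨(i : ℕ) * q + (a i : ℕ), hval a i⟩ with hF
  have hmem : ∀ a : Fin m → Fin q, F a ∈
      (Finset.univ : Finset (Fin m → Fin N)).filter Monotone := by
    intro a
    rw [Finset.mem_filter]
    refine ⟨Finset.mem_univ _, ?_⟩
    intro i j hij
    rw [Fin.le_def] at hij ⊢
    show (i : ℕ) * q + (a i : ℕ) ≤ (j : ℕ) * q + (a j : ℕ)
    rcases eq_or_lt_of_le hij with h | h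
    · have : i = j := Fin.ext h
      subst this
      exact le_rfl
    · have h1 : (i : ℕ) + 1 ≤ (j : ℕ) := h
      have h2 := Nat.mul_le_mul_right q h1
      have h3 := (a i).2
      have h4 : ((i : ℕ) + 1) * q = (i : ℕ) * q + q := by ring
      omega
  have hinj : Function.Injective F := by
    intro a b hab
    funext i
    have := congrFun hab i
    have hv : (i : ℕ) * q + (a i : ℕ) = (i : ℕ) * q + (b i : ℕ) := congrArg Fin.val this
    exact Fin.ext (by omega)
  calc q ^ m = (Finset.univ : Finset (Fin m → Fin q)).card := by
        simp [Finset.card_univ]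
    _ ≤ _ := Finset.card_le_card_of_injOn F (fun a _ => hmem a) hinj.injOn

set_option maxHeartbeats 1000000 in
/-- For `σ < 1/(1+ε)` the partial sums of `∑ j^{-(1+ε)σ}` grow like `N^{1-(1+ε)σ}`;
combined with the lower bound for sums over `m`-homogeneous prime multi-indices, any
exponent `σ` with `∑_{|α|=m, α on the first N primes} p^{-ασ} ≤ K N^{(m+1)/2}` for all `N`
must satisfy `σ ≥ (m-1)/(2m)`. -/
theorem zeta_partial_sum_and_homogeneous_lower_bound :
    (∀ σ ε : ℝ, 0 < ε → 0 < σ → σ < 1 / (1 + ε) → ∃ D > (0:ℝ), ∀ N : ℕ, 1 ≤ N →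
      D * (N : ℝ) ^ (1 - (1 + ε) * σ) ≤
        ∑ j ∈ Finset.range N, ((j : ℝ) + 1) ^ (-(1 + ε) * σ)) ∧
    (∀ (m : ℕ) (σ K : ℝ), 1 ≤ m → 0 < σ → 0 < K →
      (∀ N : ℕ,
        (∑ f ∈ (Finset.univ : Finset (Fin m → Fin N)).filter Monotone,
          (∏ i, (Nat.nth Nat.Prime (f i) : ℝ)) ^ (-σ)) ≤ K * (N : ℝ) ^ (((m : ℝ) + 1) / 2)) →
      ((m : ℝ) - 1) / (2 * m) ≤ σ) := by
  constructor
  · -- Part 1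
    intro σ ε hε hσ hσ'
    refine ⟨1, one_pos, fun N hN => ?_⟩
    have hNpos : (0:ℝ) < N := by exact_mod_cast hN
    rw [one_mul]
    have hterm : ∀ j ∈ Finset.range N,
        (N:ℝ) ^ (-(1+ε)*σ) ≤ ((j:ℝ)+1) ^ (-(1+ε)*σ) := by
      intro j hj
      rw [Finset.mem_range] at hj
      have hj' : (j:ℝ) + 1 ≤ N := by exact_mod_cast hj
      exact Real.rpow_le_rpow_of_nonpos (by positivity) hj' (by nlinarith)
    calc (N:ℝ) ^ (1 - (1+ε)*σ) = (N:ℝ) ^ ((1:ℝ) + (-(1+ε)*σ)) := by ring_nf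
      _ = (N:ℝ) ^ (1:ℝ) * (N:ℝ) ^ (-(1+ε)*σ) := Real.rpow_add hNpos _ _
      _ = ∑ _j ∈ Finset.range N, (N:ℝ) ^ (-(1+ε)*σ) := by
          rw [Finset.sum_const, Finset.card_range, Real.rpow_one, nsmul_eq_mul]
      _ ≤ _ := Finset.sum_le_sum hterm
  · -- Part 2
    intro m σ K hm hσ hK hsum
    by_contra hcon
    push_neg at hcon
    have hm1 : (1:ℝ) ≤ (m:ℝ) := by exact_mod_cast hm
    have hmpos : (0:ℝ) < m := by linarith
    set δ : ℝ := ((m:ℝ) - 1)/2 - m*σ with hδdef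
    have hδpos : 0 < δ := by
      rw [lt_div_iff₀ (by positivity)] at hcon
      rw [hδdef]
      nlinarith
    set ε : ℝ := δ/(2*(m:ℝ)*σ) with hεdef
    have hεpos : 0 < ε := by positivity
    have hprodε : (m:ℝ)*σ*ε = δ/2 := by
      rw [hεdef]
      field_simp
    have hexp : (m:ℝ) + (-(1+ε)*(m:ℝ)*σ) = ((m:ℝ)+1)/2 + δ/2 := by
      have h : -(1+ε)*(m:ℝ)*σ = -((m:ℝ)*σ) - (m:ℝ)*σ*ε := by ring
      rw [h, hprodε, hδdef]
      ring
    have hev1 : ∀ᶠ n : ℕ in Filter.atTop,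
        K * ((2*(m:ℝ))^m) < ((n:ℝ)+1)^(δ/2) := by
      have h1 : Filter.Tendsto (fun n : ℕ => ((n:ℝ)+1)) Filter.atTop Filter.atTop :=
        Filter.tendsto_atTop_add_const_right _ 1 tendsto_natCast_atTop_atTop
      have h2 := (tendsto_rpow_atTop (by positivity : 0 < δ/2)).comp h1
      exact h2.eventually_gt_atTop _
    have hev2 : ∀ᶠ n : ℕ in Filter.atTop, 2*m ≤ n + 1 :=
      Filter.eventually_atTop.mpr ⟨2*m, fun n hn => by omega⟩
    obtain ⟨n, hpn, hbig, hN2m⟩ := ((claimA ε hεpos).and_eventually (hev1.and hev2)).exists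
    set N : ℕ := n + 1 with hNdef
    have hNpos : (0:ℝ) < N := by positivity
    have hNcast : ((n:ℝ)+1) = (N:ℝ) := by push_cast [hNdef]; ring
    set q : ℕ := N / m with hqdef
    have hq : m * q ≤ N := by
      rw [hqdef, mul_comm]
      exact Nat.div_mul_le_self N m
    have hqlt : (N:ℝ) < m*q + m := by
      have h1 := Nat.div_add_mod N m
      have h2 := Nat.mod_lt N (by omega : 0 < m)
      have h3 : m * q = m * (N / m) := by rw [hqdef]
      have : N < m * q + m := by omega
      exact_mod_cast this
    have hNq : (N:ℝ)/(2*(m:ℝ)) ≤ (q:ℝ) := by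
      have h2m : (2*(m:ℝ)) ≤ (N:ℝ) := by exact_mod_cast hN2m
      rw [div_le_iff₀ (by positivity)]
      nlinarith
    -- term lower bound
    have hterm : ∀ f ∈ (Finset.univ : Finset (Fin m → Fin N)).filter Monotone,
        (N:ℝ)^(((1+ε)*(m:ℝ))*(-σ)) ≤ (∏ i, (Nat.nth Nat.Prime (f i) : ℝ)) ^ (-σ) := by
      intro f _
      have hple : ∀ i : Fin m, (Nat.nth Nat.Prime (f i) : ℝ) ≤ (N:ℝ)^(1+ε) := by
        intro i
        have h1 : Nat.nth Nat.Prime (f i) ≤ Nat.nth Nat.Prime n := by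
          apply Nat.nth_monotone Nat.infinite_setOf_prime
          have := (f i).2
          omega
        calc (Nat.nth Nat.Prime (f i) : ℝ) ≤ (Nat.nth Nat.Prime n : ℝ) := by exact_mod_cast h1
          _ ≤ ((n:ℝ)+1)^(1+ε) := hpn
          _ = (N:ℝ)^(1+ε) := by rw [hNcast]
      have hppos : ∀ i : Fin m, (0:ℝ) < (Nat.nth Nat.Prime (f i) : ℝ) := by
        intro i
        exact_mod_cast (Nat.prime_nth_prime (f i)).pos
      have hprodpos : (0:ℝ) < ∏ i, (Nat.nth Nat.Prime (f i) : ℝ) :=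
        Finset.prod_pos (fun i _ => hppos i)
      have hprodle : (∏ i, (Nat.nth Nat.Prime (f i) : ℝ)) ≤ (N:ℝ)^((1+ε)*(m:ℝ)) := by
        calc (∏ i, (Nat.nth Nat.Prime (f i) : ℝ)) ≤ ∏ _i : Fin m, (N:ℝ)^(1+ε) :=
              Finset.prod_le_prod (fun i _ => (hppos i).le) (fun i _ => hple i)
          _ = ((N:ℝ)^(1+ε))^(m:ℕ) := by
              rw [Finset.prod_const, Finset.card_univ, Fintype.card_fin]
          _ = (N:ℝ)^((1+ε)*(m:ℝ)) := by
              rw [← Real.rpow_natCast ((N:ℝ)^(1+ε)) m, ← Real.rpow_mul hNpos.le]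
      calc (N:ℝ)^(((1+ε)*(m:ℝ))*(-σ)) = ((N:ℝ)^((1+ε)*(m:ℝ)))^(-σ) :=
            Real.rpow_mul hNpos.le _ _
        _ ≤ _ := Real.rpow_le_rpow_of_nonpos hprodpos hprodle (by linarith)
    have hcard := card_monotone_ge m N q (by omega) hq
    have hsum_ge : (q:ℝ)^m * (N:ℝ)^(((1+ε)*(m:ℝ))*(-σ)) ≤
        ∑ f ∈ (Finset.univ : Finset (Fin m → Fin N)).filter Monotone,
          (∏ i, (Nat.nth Nat.Prime (f i) : ℝ)) ^ (-σ) := by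
      calc (q:ℝ)^m * (N:ℝ)^(((1+ε)*(m:ℝ))*(-σ))
          ≤ ((((Finset.univ : Finset (Fin m → Fin N)).filter Monotone).card) : ℝ) *
            (N:ℝ)^(((1+ε)*(m:ℝ))*(-σ)) := by
            apply mul_le_mul_of_nonneg_right _ (by positivity)
            exact_mod_cast hcard
        _ ≤ _ := by
            have := Finset.card_nsmul_le_sum
              ((Finset.univ : Finset (Fin m → Fin N)).filter Monotone)
              _ _ hterm
            simpa [nsmul_eq_mul] using this
    have hfinal : ((N:ℝ)/(2*(m:ℝ)))^m * (N:ℝ)^(((1+ε)*(m:ℝ))*(-σ)) ≤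
        K * (N:ℝ)^(((m:ℝ)+1)/2) := by
      have hpow : ((N:ℝ)/(2*(m:ℝ)))^m ≤ (q:ℝ)^m :=
        pow_le_pow_left₀ (by positivity) hNq m
      exact le_trans (mul_le_mul_of_nonneg_right hpow (by positivity))
        (le_trans hsum_ge (hsum N))
    have hLHS : ((N:ℝ)/(2*(m:ℝ)))^m * (N:ℝ)^(((1+ε)*(m:ℝ))*(-σ)) =
        ((N:ℝ)^(δ/2) / ((2*(m:ℝ))^m)) * (N:ℝ)^(((m:ℝ)+1)/2) := by
      rw [div_pow]
      have h6 : ((N:ℝ))^(m:ℕ) = (N:ℝ)^((m:ℝ)) := (Real.rpow_natCast _ m).symm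
      rw [h6]
      rw [div_mul_eq_mul_div, ← Real.rpow_add hNpos]
      have h7 : (m:ℝ) + ((1+ε)*(m:ℝ))*(-σ) = δ/2 + ((m:ℝ)+1)/2 := by
        have := hexp
        nlinarith [hexp]
      rw [h7, Real.rpow_add hNpos]
      ring
    rw [hLHS] at hfinal
    have hhalf : (0:ℝ) < (N:ℝ)^(((m:ℝ)+1)/2) := Real.rpow_pos_of_pos hNpos _
    have h8 : (N:ℝ)^(δ/2) / ((2*(m:ℝ))^m) ≤ K :=
      le_of_mul_le_mul_right hfinal hhalf
    rw [div_le_iff₀ (by positivity)] at h8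
    rw [hNcast] at hbig
    linarith
end
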